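/- Let I₁ > 0, V_T > 0, R_Σ > 0, and j₁ ≥ 0. The equation I₁ = (j₁ − i + I₁) · exp(−(R_Σ/V_T)·i) in the unknown i has the unique solution i* = j₁ + I₁ − (V_T/R_Σ)·W₀( I₁·(R_Σ/V_T)·exp((R_Σ/V_T)·(j₁ + I₁)) ), where W₀ is the principal branch of the Lambert W function; moreover 0 ≤ i* ≤ j₁. -/

import Mathlib

open Real

/-- The output-current equation `I₁ = (j₁ − i + I₁) exp(−(Rtot/V_T) i)` of a
single-junction photovoltaic receiver has the unique solution
`i* = j₁ + I₁ − (V_T/Rtot) W₀(I₁ (Rtot/V_T) exp((Rtot/V_T)(j₁+I₁)))`, which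
moreover satisfies `0 ≤ i* ≤ j₁`. `W` is the principal Lambert W branch,
characterized on `[0,∞)` by `W y ≥ 0` and `W y · e^{W y} = y`. -/
theorem stmt3 (I₁ V_T Rtot j₁ : ℝ) (hI : 0 < I₁) (hV : 0 < V_T) (hR : 0 < Rtot)
    (hj : 0 ≤ j₁) (W : ℝ → ℝ)
    (hW : ∀ y : ℝ, 0 ≤ y → 0 ≤ W y ∧ W y * exp (W y) = y) :
    (∀ i : ℝ,
      I₁ = (j₁ - i + I₁) * exp (-(Rtot / V_T) * i) ↔
        i = j₁ + I₁ - (V_T / Rtot) * W (I₁ * (Rtot / V_T) * exp ((Rtot / V_T) * (j₁ + I₁)))) ∧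
    0 ≤ j₁ + I₁ - (V_T / Rtot) * W (I₁ * (Rtot / V_T) * exp ((Rtot / V_T) * (j₁ + I₁))) ∧
    j₁ + I₁ - (V_T / Rtot) * W (I₁ * (Rtot / V_T) * exp ((Rtot / V_T) * (j₁ + I₁))) ≤ j₁ := by
  set a : ℝ := Rtot / V_T with ha_def
  have ha : 0 < a := div_pos hR hV
  have hane : a ≠ 0 := ne_of_gt ha
  have hVR : V_T / Rtot = a⁻¹ := by rw [ha_def, inv_div]
  have hy : (0:ℝ) < I₁ * a * exp (a * (j₁ + I₁)) := by positivity
  obtain ⟨hw0, hwe⟩ := hW (I₁ * a * exp (a * (j₁ + I₁))) hy.le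
  set w : ℝ := W (I₁ * a * exp (a * (j₁ + I₁))) with hw_def
  clear_value w
  have mono : ∀ s t : ℝ, 0 ≤ s → s < t → s * exp s < t * exp t := by
    intro s t hs hst
    have h1 : exp s < exp t := exp_lt_exp.2 hst
    nlinarith [exp_pos s, exp_pos t]
  have hwlb : a * I₁ ≤ w := by
    by_contra h
    push_neg at h
    have h1 : w * exp w < (a * I₁) * exp (a * I₁) := mono w (a * I₁) hw0 h
    have h2 : exp (a * I₁) ≤ exp (a * (j₁ + I₁)) := exp_le_exp.2 (by nlinarith)
    nlinarith [exp_pos (a * I₁)]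
  have hwub : w ≤ a * (j₁ + I₁) := by
    by_contra h
    push_neg at h
    have h1 : (a * (j₁ + I₁)) * exp (a * (j₁ + I₁)) < w * exp w :=
      mono _ _ (by nlinarith) h
    nlinarith [exp_pos (a * (j₁ + I₁))]
  have hinj : ∀ s t : ℝ, 0 ≤ s → 0 ≤ t → s * exp s = t * exp t → s = t := by
    intro s t hs ht hst
    rcases lt_trichotomy s t with h | h | h
    · exact absurd hst (ne_of_lt (mono s t hs h))
    · exact h
    · exact absurd hst.symm (ne_of_lt (mono t s ht h))
  refine ⟨fun i => ?_, ?_, ?_⟩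
  · rw [hVR]
    constructor
    · intro heq
      have hue : (a * (j₁ + I₁ - i)) * exp (a * (j₁ + I₁ - i))
          = I₁ * a * exp (a * (j₁ + I₁)) := by
        have harg : a * (j₁ + I₁ - i) = a * (j₁ + I₁) + -a * i := by ring
        rw [harg, exp_add]
        linear_combination (-(a * exp (a * (j₁ + I₁)))) * heq
      have hu0 : 0 ≤ a * (j₁ + I₁ - i) := by
        by_contra h
        push_neg at h
        nlinarith [exp_pos (a * (j₁ + I₁ - i))]
      have h3 := hinj _ w hu0 hw0 (by rw [hue, hwe])
      field_simp at h3 ⊢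
      linarith
    · intro hi
      have hu : a * (j₁ + I₁ - i) = w := by
        rw [hi]; field_simp; ring
      have hue : a * (j₁ + I₁ - i) * exp (a * (j₁ + I₁ - i))
          = I₁ * a * exp (a * (j₁ + I₁)) := by rw [hu, hwe]
      have harg : a * (j₁ + I₁ - i) = a * (j₁ + I₁) + -a * i := by ring
      rw [harg, exp_add] at hue
      have hep := exp_pos (a * (j₁ + I₁))
      nlinarith [hue]
  · rw [hVR]
    have h1 : a⁻¹ * w ≤ a⁻¹ * (a * (j₁ + I₁)) :=
      mul_le_mul_of_nonneg_left hwub (by positivity)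
    have h2 : a⁻¹ * (a * (j₁ + I₁)) = j₁ + I₁ := by field_simp
    linarith
  · rw [hVR]
    have h1 : a⁻¹ * (a * I₁) ≤ a⁻¹ * w :=
      mul_le_mul_of_nonneg_left hwlb (by positivity)
    have h2 : a⁻¹ * (a * I₁) = I₁ := by field_simp
    linarith
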